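/- Let n, p, T be positive integers, let P̄ ∈ ℝ^{n×n} be symmetric positive definite, ρ > 0, κ ∈ (0,1), Λ ∈ ℝ^{p×n}, let R₁, …, R_T be symmetric matrices in ℝ^{(n+p)×(n+p)}, and α₁, …, α_T ≥ 0. Suppose the symmetric block matrix with row/column block sizes (n, p, n) given by [ [−κ P̄, 0, 0], [0, 0, Λ P̄], [0, P̄ Λᵀ, −(1+ρ)⁻¹ P̄] ] minus Σ_{j=1}^T α_j · [ [R_j, 0], [0, 0] ] (the latter having R_j in its leading (n+p)×(n+p) block and zeros elsewhere) is negative semidefinite. Then every Φ ∈ ℝ^{n×p} satisfying Φ̃ᵀ R_j Φ̃ ⪯ 0 for all j ∈ {1, …, T}, where Φ̃ ∈ ℝ^{(n+p)×n} is the block matrix with top block Iₙ and bottom block Φᵀ, also satisfies (1+ρ) Λᵀ Φᵀ P̄⁻¹ Φ Λ ⪯ κ P̄⁻¹. -/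

import Mathlib

open Matrix

private lemma psd_smul' {m : Type*} [Fintype m] {M : Matrix m m ℝ} (hM : M.PosSemidef)
    {c : ℝ} (hc : 0 ≤ c) : (c • M).PosSemidef := by
  rw [posSemidef_iff_dotProduct_mulVec] at hM ⊢
  refine ⟨?_, fun x => ?_⟩
  · unfold Matrix.IsHermitian
    rw [conjTranspose_smul, hM.1.eq, star_trivial]
  · rw [smul_mulVec, dotProduct_smul, smul_eq_mul]
    exact mul_nonneg hc (hM.2 x)

private lemma pd_smul' {m : Type*} [Fintype m] {M : Matrix m m ℝ} (hM : M.PosDef)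
    {c : ℝ} (hc : 0 < c) : (c • M).PosDef := by
  rw [posDef_iff_dotProduct_mulVec] at hM ⊢
  refine ⟨?_, fun x hx => ?_⟩
  · unfold Matrix.IsHermitian
    rw [conjTranspose_smul, hM.1.eq, star_trivial]
  · rw [smul_mulVec, dotProduct_smul, smul_eq_mul]
    exact mul_pos hc (hM.2 hx)

private lemma psd_sum' {ι m : Type*} [Fintype m] (s : Finset ι) (f : ι → Matrix m m ℝ)
    (h : ∀ i ∈ s, (f i).PosSemidef) : (∑ i ∈ s, f i).PosSemidef := by
  classical
  induction s using Finset.induction with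
  | empty => simpa using Matrix.PosSemidef.zero
  | insert _ _ hni ih =>
    rw [Finset.sum_insert hni]
    exact (h _ (Finset.mem_insert_self _ _)).add (ih fun i hi => h i (Finset.mem_insert_of_mem hi))

private lemma psd_corner' {a b : Type*} [Fintype a] [Fintype b] [DecidableEq a]
    {S : Matrix a a ℝ} (hS : S.PosSemidef) :
    (fromBlocks S 0 0 (0 : Matrix b b ℝ)).PosSemidef := by
  have h := hS.conjTranspose_mul_mul_same (fromCols (1 : Matrix a a ℝ) (0 : Matrix a b ℝ))
  have he : (fromCols (1 : Matrix a a ℝ) (0 : Matrix a b ℝ))ᴴ *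
      S * fromCols (1 : Matrix a a ℝ) (0 : Matrix a b ℝ) = fromBlocks S 0 0 0 := by
    rw [conjTranspose_fromCols_eq_fromRows_conjTranspose]
    simp [fromRows_mul_fromCols]
    ext (i | i) (k | k) <;> simp [fromBlocks, fromRows, fromCols] <;> rfl
  rwa [he] at h

/-- The block matrix `Φ̃ = [Iₙ; Φᵀ]` with top block the identity and bottom block `Φᵀ`. -/
noncomputable def phiTilde {n p : ℕ} (Φ : Matrix (Fin n) (Fin p) ℝ) :
    Matrix (Fin n ⊕ Fin p) (Fin n) ℝ :=
  fromRows (1 : Matrix (Fin n) (Fin n) ℝ) Φᵀ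

/-- The symmetric block matrix with row/column block sizes `(n, p, n)` given by
`[[−κ P̄, 0, 0], [0, 0, Λ P̄], [0, P̄ Λᵀ, −(1+ρ)⁻¹ P̄]]`. -/
noncomputable def bigBlock {n p : ℕ} (Pb : Matrix (Fin n) (Fin n) ℝ)
    (Λ : Matrix (Fin p) (Fin n) ℝ) (ρ κ : ℝ) :
    Matrix ((Fin n ⊕ Fin p) ⊕ Fin n) ((Fin n ⊕ Fin p) ⊕ Fin n) ℝ :=
  fromBlocks (fromBlocks (-(κ • Pb)) 0 0 0)
    (fromRows (0 : Matrix (Fin n) (Fin n) ℝ) (Λ * Pb))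
    (fromCols (0 : Matrix (Fin n) (Fin n) ℝ) (Pb * Λᵀ))
    (-((1 + ρ)⁻¹ • Pb))

/-- The matrix `R_j` embedded in the leading `(n+p)×(n+p)` block, with zeros elsewhere. -/
noncomputable def leadingBlock {n p : ℕ} (R : Matrix (Fin n ⊕ Fin p) (Fin n ⊕ Fin p) ℝ) :
    Matrix ((Fin n ⊕ Fin p) ⊕ Fin n) ((Fin n ⊕ Fin p) ⊕ Fin n) ℝ :=
  fromBlocks R 0 0 0

/-- **(Statement 19)** Data-driven LMI implies the S-CBC decrease condition: if the dilated
block matrix minus `Σ_j α_j [[R_j,0],[0,0]]` is negative semidefinite, then every `Φ`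
consistent with the data (`Φ̃ᵀ R_j Φ̃ ⪯ 0` for all `j`) satisfies
`(1+ρ) Λᵀ Φᵀ P̄⁻¹ Φ Λ ⪯ κ P̄⁻¹`. -/
theorem data_driven_lmi_implies_decrease
    {n p T : ℕ} (hn : 0 < n) (hp : 0 < p) (hT : 0 < T)
    (Pb : Matrix (Fin n) (Fin n) ℝ) (hPb : Pb.PosDef)
    (ρ κ : ℝ) (hρ : 0 < ρ) (hκ0 : 0 < κ) (hκ1 : κ < 1)
    (Λ : Matrix (Fin p) (Fin n) ℝ)
    (Rj : Fin T → Matrix (Fin n ⊕ Fin p) (Fin n ⊕ Fin p) ℝ)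
    (hRj : ∀ j, (Rj j).IsHermitian)
    (α : Fin T → ℝ) (hα : ∀ j, 0 ≤ α j)
    (hLMI : (-(bigBlock Pb Λ ρ κ - ∑ j, α j • leadingBlock (Rj j))).PosSemidef) :
    ∀ Φ : Matrix (Fin n) (Fin p) ℝ,
      (∀ j, (-((phiTilde Φ)ᵀ * Rj j * phiTilde Φ)).PosSemidef) →
      (κ • Pb⁻¹ - (1 + ρ) • (Λᵀ * Φᵀ * Pb⁻¹ * Φ * Λ)).PosSemidef := by
  intro Φ hΦ
  have hρ1 : (0:ℝ) < 1 + ρ := by linarith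
  have ctR : ∀ {a b : Type} [Fintype a] [Fintype b] (A : Matrix a b ℝ), Aᴴ = Aᵀ := by
    intro a b _ _ A; ext i j; simp [conjTranspose_apply]
  set Pt := phiTilde Φ with hPt
  set E : Matrix ((Fin n ⊕ Fin p) ⊕ Fin n) (Fin n ⊕ Fin n) ℝ :=
    fromBlocks Pt 0 0 (1 : Matrix (Fin n) (Fin n) ℝ) with hE
  have hEH : Eᴴ = fromBlocks Ptᴴ 0 0 (1 : Matrix (Fin n) (Fin n) ℝ) := by
    rw [hE, fromBlocks_conjTranspose]; simp
  -- Eᴴ * leadingBlock (Rj j) * E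
  have compL : ∀ j, Eᴴ * leadingBlock (Rj j) * E =
      fromBlocks (Ptᴴ * Rj j * Pt) 0 0 (0 : Matrix (Fin n) (Fin n) ℝ) := by
    intro j
    rw [hEH, hE, leadingBlock, fromBlocks_multiply, fromBlocks_multiply]
    simp [Matrix.mul_assoc]
  -- the conjugated LMI
  have key := hLMI.conjTranspose_mul_mul_same E
  have hSum : Eᴴ * (∑ j, α j • leadingBlock (Rj j)) * E =
      ∑ j, α j • fromBlocks (Ptᴴ * Rj j * Pt) 0 0 (0 : Matrix (Fin n) (Fin n) ℝ) := by
    rw [Matrix.mul_sum, Matrix.sum_mul]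
    refine Finset.sum_congr rfl fun j _ => ?_
    rw [Matrix.mul_smul, Matrix.smul_mul, compL j]
  have h2 : (-(Eᴴ * bigBlock Pb Λ ρ κ * E)).PosSemidef := by
    have heq : -(Eᴴ * bigBlock Pb Λ ρ κ * E) =
        Eᴴ * (-(bigBlock Pb Λ ρ κ - ∑ j, α j • leadingBlock (Rj j))) * E +
          ∑ j, α j • fromBlocks (-(Ptᴴ * Rj j * Pt)) 0 0 (0 : Matrix (Fin n) (Fin n) ℝ) := by
      have hsneg : ∑ j, α j • fromBlocks (-(Ptᴴ * Rj j * Pt)) 0 0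
          (0 : Matrix (Fin n) (Fin n) ℝ) =
          -(Eᴴ * (∑ j, α j • leadingBlock (Rj j)) * E) := by
        rw [hSum, ← Finset.sum_neg_distrib]
        refine Finset.sum_congr rfl fun j _ => ?_
        rw [← smul_neg]
        congr 1
        ext (i | i) (k | k) <;> simp [fromBlocks]
      rw [hsneg, neg_sub]
      simp only [Matrix.mul_sub, Matrix.sub_mul]
      abel
    rw [heq]
    refine key.add (psd_sum' _ _ fun j _ => psd_smul' ?_ (hα j))
    refine psd_corner' ?_
    have := hΦ j
    rwa [← ctR Pt] at this
  -- compute the conjugated big block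
  have hN : Eᴴ * bigBlock Pb Λ ρ κ * E =
      fromBlocks (-(κ • Pb)) (Φ * Λ * Pb) (Pb * Λᵀ * Φᵀ) (-((1 + ρ)⁻¹ • Pb)) := by
    have hPtH : Ptᴴ = fromCols (1 : Matrix (Fin n) (Fin n) ℝ) Φ := by
      rw [hPt, phiTilde, conjTranspose_fromRows_eq_fromCols_conjTranspose]
      simp [ctR]
    rw [hEH, hE, bigBlock, fromBlocks_multiply, fromBlocks_multiply, hPtH, hPt, phiTilde]
    simp [fromCols_mul_fromBlocks, fromCols_mul_fromRows, fromBlocks_mul_fromRows,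
      Matrix.mul_assoc]
  rw [hN] at h2
  have hPbT : Pbᵀ = Pb := by rw [← ctR Pb]; exact hPb.1.eq
  have hBH : (-(Φ * Λ * Pb))ᴴ = -(Pb * Λᵀ * Φᵀ) := by
    rw [conjTranspose_neg, conjTranspose_mul, conjTranspose_mul]
    simp [ctR, hPbT, Matrix.mul_assoc]
  have h3 : (fromBlocks (κ • Pb) (-(Φ * Λ * Pb)) (-(Φ * Λ * Pb))ᴴ ((1 + ρ)⁻¹ • Pb)).PosSemidef := by
    have : -(fromBlocks (-(κ • Pb)) (Φ * Λ * Pb) (Pb * Λᵀ * Φᵀ) (-((1 + ρ)⁻¹ • Pb))) =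
        fromBlocks (κ • Pb) (-(Φ * Λ * Pb)) (-(Φ * Λ * Pb))ᴴ ((1 + ρ)⁻¹ • Pb) := by
      rw [hBH]
      ext (i | i) (k | k) <;> simp [fromBlocks]
    rwa [this] at h2
  have hA : (κ • Pb).PosDef := pd_smul' hPb hκ0
  haveI := hA.isUnit.invertible
  haveI := hPb.isUnit.invertible
  haveI : Invertible κ := invertibleOfNonzero hκ0.ne'
  have hdet : IsUnit Pb.det := (Matrix.isUnit_iff_isUnit_det Pb).mp hPb.isUnit
  have hSchur := (PosDef.fromBlocks₁₁ (-(Φ * Λ * Pb)) ((1 + ρ)⁻¹ • Pb) hA).mp h3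
  have hinv : (κ • Pb)⁻¹ = κ⁻¹ • Pb⁻¹ := by
    apply Matrix.inv_eq_right_inv
    rw [Matrix.smul_mul, Matrix.mul_smul, Matrix.mul_nonsing_inv _ hdet, smul_smul,
      mul_inv_cancel₀ hκ0.ne', one_smul]
  rw [hBH, hinv] at hSchur
  have hC := hSchur.conjTranspose_mul_mul_same Pb⁻¹
  have hPbinvH : (Pb⁻¹)ᴴ = Pb⁻¹ := hPb.1.inv.eq
  have hC' : ((1 + ρ)⁻¹ • Pb⁻¹ - κ⁻¹ • (Λᵀ * Φᵀ * Pb⁻¹ * Φ * Λ)).PosSemidef := by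
    have hcalc : (Pb⁻¹)ᴴ * ((1 + ρ)⁻¹ • Pb - -(Pb * Λᵀ * Φᵀ) * (κ⁻¹ • Pb⁻¹) * -(Φ * Λ * Pb)) * Pb⁻¹
        = (1 + ρ)⁻¹ • Pb⁻¹ - κ⁻¹ • (Λᵀ * Φᵀ * Pb⁻¹ * Φ * Λ) := by
      rw [hPbinvH]
      simp only [Matrix.neg_mul, Matrix.mul_neg, neg_neg, Matrix.mul_sub, Matrix.sub_mul,
        Matrix.mul_smul, Matrix.smul_mul, Matrix.mul_assoc,
        Matrix.inv_mul_cancel_left_of_invertible, Matrix.mul_inv_cancel_left_of_invertible,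
        Matrix.mul_inv_of_invertible, Matrix.inv_mul_of_invertible, Matrix.mul_one, Matrix.one_mul,
        smul_neg, neg_neg]
    rwa [hcalc] at hC
  have hfinal : κ • Pb⁻¹ - (1 + ρ) • (Λᵀ * Φᵀ * Pb⁻¹ * Φ * Λ)
      = (κ * (1 + ρ)) • ((1 + ρ)⁻¹ • Pb⁻¹ - κ⁻¹ • (Λᵀ * Φᵀ * Pb⁻¹ * Φ * Λ)) := by
    have s1 : κ * (1 + ρ) * (1 + ρ)⁻¹ = κ := by field_simp
    have s2 : κ * (1 + ρ) * κ⁻¹ = 1 + ρ := by field_simp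
    rw [smul_sub, smul_smul, smul_smul, s1, s2]
  rw [hfinal]
  exact psd_smul' hC' (le_of_lt (mul_pos hκ0 hρ1))
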